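/- Let E be a graph and R a unital commutative ring. If I is a nonzero graded ideal of L_R(E), then there exist a vertex v ∈ E^0 and a nonzero r ∈ R such that rv ∈ I. -/

import Mathlib

structure LPGraph where
  V : Type
  E : Type
  s : E → V
  r : E → V

namespace LPGraph

/-- `v ≥ w`: there is a directed path (possibly trivial) from `v` to `w`. -/
def Reaches (G : LPGraph) (v w : G.V) : Prop :=
  Relation.ReflTransGen (fun a b => ∃ e : G.E, G.s e = a ∧ G.r e = b) v w

def Hereditary (G : LPGraph) (X : Set G.V) : Prop :=
  ∀ e : G.E, G.s e ∈ X → G.r e ∈ X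

def Saturated (G : LPGraph) (X : Set G.V) : Prop :=
  ∀ v : G.V, {e : G.E | G.s e = v}.Finite → {e : G.E | G.s e = v}.Nonempty →
    (∀ e : G.E, G.s e = v → G.r e ∈ X) → v ∈ X

/-- The saturation of `X`: the smallest saturated subset containing `X`. -/
def saturation (G : LPGraph) (X : Set G.V) : Set G.V :=
  ⋂₀ {S : Set G.V | G.Saturated S ∧ X ⊆ S}

def tree (G : LPGraph) (v : G.V) : Set G.V := {w | G.Reaches v w}

def MT1 (G : LPGraph) (M : Set G.V) : Prop :=
  ∀ v w : G.V, w ∈ M → G.Reaches v w → v ∈ M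

def MT2 (G : LPGraph) (M : Set G.V) : Prop :=
  ∀ v ∈ M, {e : G.E | G.s e = v}.Finite → {e : G.E | G.s e = v}.Nonempty →
    ∃ e : G.E, G.s e = v ∧ G.r e ∈ M

def MT3on (G : LPGraph) (M : Set G.V) : Prop :=
  ∀ v ∈ M, ∀ w ∈ M, ∃ y ∈ M, G.Reaches v y ∧ G.Reaches w y

def MT3 (G : LPGraph) : Prop :=
  ∀ v w : G.V, ∃ y : G.V, G.Reaches v y ∧ G.Reaches w y

def Omega (G : LPGraph) (X : Set G.V) : Set G.V :=
  {w | w ∉ X ∧ ∀ v ∈ X, ¬ G.Reaches w v}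

def OmegaV (G : LPGraph) (v : G.V) : Set G.V :=
  {w | w ≠ v ∧ ¬ G.Reaches w v}

end LPGraph

namespace LPGraph

def IsBifurcation (G : LPGraph) (v : G.V) : Prop :=
  ∃ e f : G.E, e ≠ f ∧ G.s e = v ∧ G.s f = v

def IsPathList (G : LPGraph) (l : List G.E) : Prop :=
  l.Chain' (fun e f => G.r e = G.s f)

def IsClosedPath (G : LPGraph) (v : G.V) (l : List G.E) : Prop :=
  l ≠ [] ∧ G.IsPathList l ∧ (∀ e ∈ l.head?, G.s e = v) ∧ (∀ e ∈ l.getLast?, G.r e = v)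

def IsClosedSimplePath (G : LPGraph) (v : G.V) (l : List G.E) : Prop :=
  G.IsClosedPath v l ∧ ∀ e ∈ l.tail, G.s e ≠ v

def ConditionK (G : LPGraph) : Prop :=
  ∀ v : G.V, (¬ ∃ l : List G.E, G.IsClosedPath v l) ∨
    (∃ l₁ l₂ : List G.E, G.IsClosedSimplePath v l₁ ∧ G.IsClosedSimplePath v l₂ ∧ l₁ ≠ l₂)

def ConditionL (G : LPGraph) : Prop :=
  ∀ (v : G.V) (l : List G.E), G.IsClosedSimplePath v l →
    ∃ e ∈ l, ∃ f : G.E, f ≠ e ∧ G.s f = G.s e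

/-- `v` is a line point: no vertex in the tree of `v` is a bifurcation or the base of a
closed path. -/
def LinePoint (G : LPGraph) (v : G.V) : Prop :=
  ∀ w : G.V, G.Reaches v w →
    ¬ G.IsBifurcation w ∧ ¬ ∃ l : List G.E, G.IsClosedPath w l

/-- `B_H`: vertices outside `H` emitting infinitely many edges, but finitely many
(and at least one) into `E⁰ \ H`. -/
def BH (G : LPGraph) (H : Set G.V) : Set G.V :=
  {v | v ∉ H ∧ {e : G.E | G.s e = v}.Infinite ∧
    {e : G.E | G.s e = v ∧ G.r e ∉ H}.Finite ∧
    {e : G.E | G.s e = v ∧ G.r e ∉ H}.Nonempty}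

/-- An admissible pair: `H` hereditary saturated, `S ⊆ B_H`. -/
def Admissible (G : LPGraph) (H S : Set G.V) : Prop :=
  G.Hereditary H ∧ G.Saturated H ∧ S ⊆ G.BH H

/-- Finite paths in `G`, indexed by source and range. -/
inductive Path (G : LPGraph) : G.V → G.V → Type
  | nil (v : G.V) : Path G v v
  | cons (e : G.E) {w : G.V} (p : Path G (G.r e) w) : Path G (G.s e) w

def Path.length {G : LPGraph} : ∀ {v w : G.V}, Path G v w → ℕ
  | _, _, .nil _ => 0
  | _, _, .cons _ p => p.length + 1

/-- The path contains no bifurcations among the sources of its edges. -/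
def Path.NoBif {G : LPGraph} : ∀ {v w : G.V}, Path G v w → Prop
  | _, _, .nil _ => True
  | _, _, .cons e p => (∀ f : _, LPGraph.s _ f = LPGraph.s _ e → f = e) ∧ p.NoBif

end LPGraph

/-- Generators of the Leavitt path algebra: vertices, real edges and ghost edges. -/
inductive LGen (G : LPGraph) : Type
  | vertex : G.V → LGen G
  | edge : G.E → LGen G
  | ghost : G.E → LGen G

variable (R : Type) [CommRing R] (G : LPGraph)

noncomputable def fv (v : G.V) : FreeAlgebra R (LGen G) := FreeAlgebra.ι R (LGen.vertex v)
noncomputable def fe (e : G.E) : FreeAlgebra R (LGen G) := FreeAlgebra.ι R (LGen.edge e)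
noncomputable def fg (e : G.E) : FreeAlgebra R (LGen G) := FreeAlgebra.ι R (LGen.ghost e)

/-- The defining relations of the Leavitt path algebra. -/
inductive LRel : FreeAlgebra R (LGen G) → FreeAlgebra R (LGen G) → Prop
  | idem (v : G.V) : LRel (fv R G v * fv R G v) (fv R G v)
  | orth (v w : G.V) (h : v ≠ w) : LRel (fv R G v * fv R G w) 0
  | edge_src (e : G.E) : LRel (fv R G (G.s e) * fe R G e) (fe R G e)
  | edge_rng (e : G.E) : LRel (fe R G e * fv R G (G.r e)) (fe R G e)
  | ghost_rng (e : G.E) : LRel (fv R G (G.r e) * fg R G e) (fg R G e)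
  | ghost_src (e : G.E) : LRel (fg R G e * fv R G (G.s e)) (fg R G e)
  | ck1_same (e : G.E) : LRel (fg R G e * fe R G e) (fv R G (G.r e))
  | ck1_diff (e f : G.E) (h : e ≠ f) : LRel (fg R G e * fe R G f) 0
  | ck2 (v : G.V) (h1 : {e : G.E | G.s e = v}.Finite)
      (h2 : {e : G.E | G.s e = v}.Nonempty) :
      LRel (fv R G v) (∑ e ∈ h1.toFinset, fe R G e * fg R G e)

/-- The Leavitt path algebra `L_R(E)`. -/
abbrev LPA := RingQuot (LRel R G)

noncomputable def Xv (v : G.V) : LPA R G := RingQuot.mkAlgHom R (LRel R G) (fv R G v)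
noncomputable def Xe (e : G.E) : LPA R G := RingQuot.mkAlgHom R (LRel R G) (fe R G e)
noncomputable def Xg (e : G.E) : LPA R G := RingQuot.mkAlgHom R (LRel R G) (fg R G e)

open MulOpposite in
/-- The involution on `L_R(E)`, built from the universal property, sending
`v ↦ v`, `e ↦ e*`, `e* ↦ e` and reversing products. -/
noncomputable def preStar : FreeAlgebra R (LGen G) →ₐ[R] (LPA R G)ᵐᵒᵖ :=
  FreeAlgebra.lift R fun x => match x with
    | LGen.vertex v => op (Xv R G v)
    | LGen.edge e => op (Xg R G e)
    | LGen.ghost e => op (Xe R G e)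

section starlemmas

lemma Xv_mul_self (v : G.V) : Xv R G v * Xv R G v = Xv R G v := by
  simpa only [Xv, map_mul] using RingQuot.mkAlgHom_rel R (LRel.idem (R := R) (G := G) v)

lemma Xv_mul_Xv (v w : G.V) (h : v ≠ w) : Xv R G v * Xv R G w = 0 := by
  simpa only [Xv, map_mul, map_zero] using
    RingQuot.mkAlgHom_rel R (LRel.orth (R := R) (G := G) v w h)

lemma Xv_mul_Xe (e : G.E) : Xv R G (G.s e) * Xe R G e = Xe R G e := by
  simpa only [Xv, Xe, map_mul] using RingQuot.mkAlgHom_rel R (LRel.edge_src (R := R) (G := G) e)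

lemma Xe_mul_Xv (e : G.E) : Xe R G e * Xv R G (G.r e) = Xe R G e := by
  simpa only [Xv, Xe, map_mul] using RingQuot.mkAlgHom_rel R (LRel.edge_rng (R := R) (G := G) e)

lemma Xv_mul_Xg (e : G.E) : Xv R G (G.r e) * Xg R G e = Xg R G e := by
  simpa only [Xv, Xg, map_mul] using RingQuot.mkAlgHom_rel R (LRel.ghost_rng (R := R) (G := G) e)

lemma Xg_mul_Xv (e : G.E) : Xg R G e * Xv R G (G.s e) = Xg R G e := by
  simpa only [Xv, Xg, map_mul] using RingQuot.mkAlgHom_rel R (LRel.ghost_src (R := R) (G := G) e)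

lemma Xg_mul_Xe_same (e : G.E) : Xg R G e * Xe R G e = Xv R G (G.r e) := by
  simpa only [Xv, Xe, Xg, map_mul] using
    RingQuot.mkAlgHom_rel R (LRel.ck1_same (R := R) (G := G) e)

lemma Xg_mul_Xe_diff (e f : G.E) (h : e ≠ f) : Xg R G e * Xe R G f = 0 := by
  simpa only [Xe, Xg, map_mul, map_zero] using
    RingQuot.mkAlgHom_rel R (LRel.ck1_diff (R := R) (G := G) e f h)

lemma Xv_ck2 (v : G.V) (h1 : {e : G.E | G.s e = v}.Finite)
    (h2 : {e : G.E | G.s e = v}.Nonempty) :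
    Xv R G v = ∑ e ∈ h1.toFinset, Xe R G e * Xg R G e := by
  simpa only [Xv, Xe, Xg, map_mul, map_sum] using
    RingQuot.mkAlgHom_rel R (LRel.ck2 (R := R) (G := G) v h1 h2)

open MulOpposite in
lemma preStar_rel : ∀ ⦃a b : FreeAlgebra R (LGen G)⦄, LRel R G a b →
    preStar R G a = preStar R G b := by
  intro a b h
  induction h with
  | idem v =>
      simp only [map_mul, preStar, fv, FreeAlgebra.lift_ι_apply, ← op_mul]
      exact congrArg op (Xv_mul_self R G v)
  | orth v w h =>
      simp only [map_mul, map_zero, preStar, fv, FreeAlgebra.lift_ι_apply, ← op_mul]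
      rw [Xv_mul_Xv R G w v h.symm]; rfl
  | edge_src e =>
      simp only [map_mul, preStar, fv, fe, FreeAlgebra.lift_ι_apply, ← op_mul]
      exact congrArg op (Xg_mul_Xv R G e)
  | edge_rng e =>
      simp only [map_mul, preStar, fv, fe, FreeAlgebra.lift_ι_apply, ← op_mul]
      exact congrArg op (Xv_mul_Xg R G e)
  | ghost_rng e =>
      simp only [map_mul, preStar, fv, fg, FreeAlgebra.lift_ι_apply, ← op_mul]
      exact congrArg op (Xe_mul_Xv R G e)
  | ghost_src e =>
      simp only [map_mul, preStar, fv, fg, FreeAlgebra.lift_ι_apply, ← op_mul]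
      exact congrArg op (Xv_mul_Xe R G e)
  | ck1_same e =>
      simp only [map_mul, preStar, fv, fe, fg, FreeAlgebra.lift_ι_apply, ← op_mul]
      exact congrArg op (Xg_mul_Xe_same R G e)
  | ck1_diff e f h =>
      simp only [map_mul, map_zero, preStar, fe, fg, FreeAlgebra.lift_ι_apply, ← op_mul]
      rw [Xg_mul_Xe_diff R G f e h.symm]; rfl
  | ck2 v h1 h2 =>
      simp only [map_sum, map_mul, preStar, fv, fe, fg, FreeAlgebra.lift_ι_apply, ← op_mul,
        ← Finset.op_sum]
      exact congrArg op (Xv_ck2 R G v h1 h2)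

end starlemmas

open MulOpposite in
noncomputable def starHom : LPA R G →ₐ[R] (LPA R G)ᵐᵒᵖ :=
  RingQuot.liftAlgHom R ⟨preStar R G, preStar_rel R G⟩

/-- The canonical involution (`*`-operation) on `L_R(E)`. -/
noncomputable def lpaStar (x : LPA R G) : LPA R G := MulOpposite.unop (starHom R G x)

/-- The element of `L_R(E)` associated to a path (product of real edges;
a trivial path gives the vertex). -/
noncomputable def pathE : ∀ {v w : G.V}, G.Path v w → LPA R G
  | _, _, .nil v => Xv R G v
  | _, _, .cons e p => Xe R G e * pathE p

/-- The ghost element `α*` of `L_R(E)` associated to a path `α`. -/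
noncomputable def pathG : ∀ {v w : G.V}, G.Path v w → LPA R G
  | _, _, .nil v => Xv R G v
  | _, _, .cons e p => pathG p * Xg R G e

/-- The homogeneous lpaComponent of degree `k` of `L_R(E)`:
the `R`-span of elements `αβ*` with `|α| - |β| = k`. -/
noncomputable def lpaComponent (k : ℤ) : Submodule R (LPA R G) :=
  Submodule.span R {x : LPA R G |
    ∃ (v₁ v₂ w : G.V) (α : G.Path v₁ w) (β : G.Path v₂ w),
      (α.length : ℤ) - (β.length : ℤ) = k ∧ x = pathE R G α * pathG R G β}

/-- A two-sided ideal of `L_R(E)` is graded if each of its elements is an `R`-linear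
combination of homogeneous elements belonging to the ideal. -/
def IsGraded (I : TwoSidedIdeal (LPA R G)) : Prop :=
  ∀ x ∈ I, x ∈ Submodule.span R
    (⋃ k : ℤ, (I : Set (LPA R G)) ∩ (lpaComponent R G k : Set (LPA R G)))

/-- A basic ideal: `r • x ∈ I` with `r ≠ 0` implies `x ∈ I`, for `x` a vertex or an
element of the form `v - ∑ᵢ eᵢeᵢ*` with `s(eᵢ) = v`. -/
def IsBasic (I : TwoSidedIdeal (LPA R G)) : Prop :=
  (∀ (r : R) (v : G.V), r ≠ 0 → r • Xv R G v ∈ I → Xv R G v ∈ I) ∧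
  (∀ (r : R) (v : G.V) (F : Finset G.E), r ≠ 0 → (∀ e ∈ F, G.s e = v) →
    r • (Xv R G v - ∑ e ∈ F, Xe R G e * Xg R G e) ∈ I →
    (Xv R G v - ∑ e ∈ F, Xe R G e * Xg R G e) ∈ I)

/-- `v^H = v - ∑_{s(e)=v, r(e)∉H} ee*`. -/
noncomputable def vH (H : Set G.V) (v : G.V) : LPA R G :=
  Xv R G v - ∑ᶠ (e : G.E) (_ : G.s e = v ∧ G.r e ∉ H), Xe R G e * Xg R G e

/-- `I(H,S)`: the two-sided ideal generated by `{v : v ∈ H} ∪ {v^H : v ∈ S}`. -/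
noncomputable def IHS (H S : Set G.V) : TwoSidedIdeal (LPA R G) :=
  TwoSidedIdeal.span ((fun v => Xv R G v) '' H ∪ (fun v => vH R G H v) '' S)

/-- The quotient ring of `L_R(E)` by a two-sided ideal, as an `R`-algebra. -/
abbrev QuotLPA (I : TwoSidedIdeal (LPA R G)) := RingQuot (fun a b : LPA R G => a - b ∈ I)

/-- The quotient graph `E/(H,S)`. -/
def quotGraph (H S : Set G.V) (hH : G.Hereditary H) : LPGraph where
  V := {v : G.V // v ∉ H} ⊕ {v : G.V // v ∈ G.BH H ∧ v ∉ S}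
  E := {e : G.E // G.r e ∉ H} ⊕ {e : G.E // G.r e ∈ G.BH H ∧ G.r e ∉ S}
  s := fun x => match x with
    | Sum.inl e => Sum.inl ⟨G.s e.1, fun h => e.2 (hH e.1 h)⟩
    | Sum.inr e => Sum.inl ⟨G.s e.1, fun h => e.2.1.1 (hH e.1 h)⟩
  r := fun x => match x with
    | Sum.inl e => Sum.inl ⟨G.r e.1, e.2⟩
    | Sum.inr e => Sum.inr ⟨G.r e.1, e.2⟩


open LPGraph

section Aux
open scoped Classical
variable (R : Type) [CommRing R] (G : LPGraph)

lemma Xv_mul_Xe_ne (u : G.V) (e : G.E) (h : u ≠ G.s e) : Xv R G u * Xe R G e = 0 := by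
  rw [← Xv_mul_Xe R G e, ← mul_assoc, Xv_mul_Xv R G u _ h, zero_mul]

lemma Xe_mul_Xv_ne (e : G.E) (u : G.V) (h : u ≠ G.r e) : Xe R G e * Xv R G u = 0 := by
  rw [← Xe_mul_Xv R G e, mul_assoc, Xv_mul_Xv R G _ u h.symm, mul_zero]

lemma Xv_mul_Xg_ne (u : G.V) (e : G.E) (h : u ≠ G.r e) : Xv R G u * Xg R G e = 0 := by
  rw [← Xv_mul_Xg R G e, ← mul_assoc, Xv_mul_Xv R G u _ h, zero_mul]

lemma Xg_mul_Xv_ne (e : G.E) (u : G.V) (h : u ≠ G.s e) : Xg R G e * Xv R G u = 0 := by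
  rw [← Xg_mul_Xv R G e, mul_assoc, Xv_mul_Xv R G _ u h.symm, mul_zero]

lemma pathE_cons (e : G.E) {w : G.V} (p : G.Path (G.r e) w) :
    pathE R G (Path.cons e p) = Xe R G e * pathE R G p := rfl

lemma pathG_cons (e : G.E) {w : G.V} (p : G.Path (G.r e) w) :
    pathG R G (Path.cons e p) = pathG R G p * Xg R G e := rfl

lemma pathE_nil (v : G.V) : pathE R G (Path.nil v) = Xv R G v := rfl
lemma pathG_nil (v : G.V) : pathG R G (Path.nil v) = Xv R G v := rfl

lemma Xv_mul_pathE_self {v w : G.V} (α : G.Path v w) :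
    Xv R G v * pathE R G α = pathE R G α := by
  cases α with
  | nil v => exact Xv_mul_self R G v
  | cons e p => rw [pathE_cons, ← mul_assoc, Xv_mul_Xe]

lemma Xv_mul_pathE_ne {v w : G.V} (α : G.Path v w) (u : G.V) (h : u ≠ v) :
    Xv R G u * pathE R G α = 0 := by
  cases α with
  | nil v => exact Xv_mul_Xv R G u v h
  | cons e p => rw [pathE_cons, ← mul_assoc, Xv_mul_Xe_ne R G u e h, zero_mul]

lemma pathG_mul_Xv_self {v w : G.V} (β : G.Path v w) :
    pathG R G β * Xv R G v = pathG R G β := by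
  cases β with
  | nil v => exact Xv_mul_self R G v
  | cons e p => rw [pathG_cons, mul_assoc, Xg_mul_Xv]

lemma pathG_mul_Xv_ne {v w : G.V} (β : G.Path v w) (u : G.V) (h : u ≠ v) :
    pathG R G β * Xv R G u = 0 := by
  cases β with
  | nil v => exact Xv_mul_Xv R G v u (Ne.symm h)
  | cons e p => rw [pathG_cons, mul_assoc, Xg_mul_Xv_ne R G e u h, mul_zero]

lemma pathE_mul_Xv_self {v w : G.V} (α : G.Path v w) :
    pathE R G α * Xv R G w = pathE R G α := by
  induction α with
  | nil v => exact Xv_mul_self R G v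
  | cons e p ih => rw [pathE_cons, mul_assoc, ih]

lemma pathE_mul_Xv_ne {v w : G.V} (α : G.Path v w) :
    ∀ u : G.V, u ≠ w → pathE R G α * Xv R G u = 0 := by
  induction α with
  | nil v => exact fun u h => Xv_mul_Xv R G v u (Ne.symm h)
  | cons e p ih => intro u h; rw [pathE_cons, mul_assoc, ih u h, mul_zero]

lemma Xv_mul_pathG_self {v w : G.V} (β : G.Path v w) :
    Xv R G w * pathG R G β = pathG R G β := by
  induction β with
  | nil v => exact Xv_mul_self R G v
  | cons e p ih => rw [pathG_cons, ← mul_assoc, ih]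

lemma Xv_mul_pathG_ne {v w : G.V} (β : G.Path v w) :
    ∀ u : G.V, u ≠ w → Xv R G u * pathG R G β = 0 := by
  induction β with
  | nil v => exact fun u h => Xv_mul_Xv R G u v h
  | cons e p ih => intro u h; rw [pathG_cons, ← mul_assoc, ih u h, zero_mul]

lemma Xg_mul_pathE_cons (e e₀ : G.E) {w : G.V} (α' : G.Path (G.r e₀) w) :
    Xg R G e * pathE R G (Path.cons e₀ α') =
      if e = e₀ then pathE R G α' else 0 := by
  rw [pathE_cons]
  split_ifs with h
  · subst h; rw [← mul_assoc, Xg_mul_Xe_same, Xv_mul_pathE_self]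
  · rw [← mul_assoc, Xg_mul_Xe_diff R G e e₀ h, zero_mul]

lemma pathG_cons_mul_Xe (f₀ f : G.E) {w : G.V} (β' : G.Path (G.r f₀) w) :
    pathG R G (Path.cons f₀ β') * Xe R G f =
      if f = f₀ then pathG R G β' else 0 := by
  rw [pathG_cons]
  split_ifs with h
  · subst h; rw [mul_assoc, Xg_mul_Xe_same, pathG_mul_Xv_self]
  · rw [mul_assoc, Xg_mul_Xe_diff R G f₀ f (fun hh => h hh.symm), mul_zero]

end Aux

open LPGraph

section Aux2
open scoped Classical
variable (R : Type) [CommRing R] (G : LPGraph)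

structure MonD (G : LPGraph) where
  v₁ : G.V
  v₂ : G.V
  w : G.V
  α : LPGraph.Path G v₁ w
  β : LPGraph.Path G v₂ w

noncomputable def MonD.val (m : MonD G) : LPA R G := pathE R G m.α * pathG R G m.β
def MonD.deg (m : MonD G) : ℤ := (m.α.length : ℤ) - (m.β.length : ℤ)
def MonD.siz (m : MonD G) : ℕ := max m.α.length m.β.length

noncomputable def msum (l : List (R × MonD G)) : LPA R G :=
  (l.map (fun p => p.1 • MonD.val R G p.2)).sum

lemma msum_nil : msum R G [] = 0 := rfl
lemma msum_cons (p : R × MonD G) (l : List (R × MonD G)) :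
    msum R G (p :: l) = p.1 • MonD.val R G p.2 + msum R G l := by
  simp [msum]

lemma msum_append (l₁ l₂ : List (R × MonD G)) :
    msum R G (l₁ ++ l₂) = msum R G l₁ + msum R G l₂ := by
  simp [msum]

-- generic list-sum helpers in LPA
lemma list_mul_sum {ι : Type} (a : LPA R G) (l : List ι) (f : ι → LPA R G) :
    a * (l.map f).sum = (l.map (fun x => a * f x)).sum := by
  induction l with
  | nil => simp
  | cons p t ih => simp [mul_add, ih]

lemma list_sum_mul {ι : Type} (a : LPA R G) (l : List ι) (f : ι → LPA R G) :
    (l.map f).sum * a = (l.map (fun x => f x * a)).sum := by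
  induction l with
  | nil => simp
  | cons p t ih => simp [add_mul, ih]

lemma mul_list_sum_mul {ι : Type} (a b : LPA R G) (l : List ι) (f : ι → LPA R G) :
    a * (l.map f).sum * b = (l.map (fun x => a * f x * b)).sum := by
  rw [list_mul_sum, list_sum_mul]

lemma finset_sum_list_sum {ι κ : Type} (s : Finset κ) (l : List ι) (f : κ → ι → LPA R G) :
    ∑ b ∈ s, (l.map (f b)).sum = (l.map (fun a => ∑ b ∈ s, f b a)).sum := by
  induction l with
  | nil => simp
  | cons p t ih => simp [Finset.sum_add_distrib, ih]

lemma exists_smul_sum {ι : Type} (l : List ι) (f : ι → LPA R G) (D : LPA R G)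
    (h : ∀ p ∈ l, ∃ c : R, f p = c • D) : ∃ s : R, (l.map f).sum = s • D := by
  induction l with
  | nil => exact ⟨0, by simp⟩
  | cons p t ih =>
    obtain ⟨c, hc⟩ := h p (by simp)
    obtain ⟨s, hs⟩ := ih (fun q hq => h q (by simp [hq]))
    exact ⟨c + s, by simp [hc, hs, add_smul]⟩

lemma list_sum_sub {ι : Type} (l : List ι) (f g : ι → LPA R G) :
    (l.map f).sum - (l.map g).sum = (l.map (fun x => f x - g x)).sum := by
  induction l with
  | nil => simp
  | cons p t ih => simp only [List.map_cons, List.sum_cons, ← ih]; abel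

lemma sum_ite_eq_filter {ι : Type} (l : List ι) (f : ι → LPA R G) (P : ι → Prop) [DecidablePred P] :
    (l.map fun x => if P x then f x else 0).sum
      = ((l.filter fun x => decide (P x)).map f).sum := by
  induction l with
  | nil => rfl
  | cons a t ih => by_cases h : P a <;> simp [List.filter_cons, h, ih]

lemma sum_product_diag (E₁ E₂ : Finset G.E) (h : G.E → LPA R G) :
    (∑ q ∈ E₁ ×ˢ E₂, if q.1 = q.2 then h q.1 else 0) = ∑ e ∈ E₁ ∩ E₂, h e := by
  rw [Finset.sum_product]
  calc ∑ e ∈ E₁, ∑ f ∈ E₂, (if e = f then h e else 0)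
      = ∑ e ∈ E₁, (if e ∈ E₂ then h e else 0) := by
        refine Finset.sum_congr rfl fun e _ => ?_
        rw [Finset.sum_ite_eq E₂ e (fun _ => h e)]
    _ = ∑ e ∈ E₁ ∩ E₂, h e := Finset.sum_ite_mem E₁ E₂ h

def Homog (x : LPA R G) (k : ℤ) : Prop :=
  ∃ l : List (R × MonD G), (∀ p ∈ l, MonD.deg G p.2 = k) ∧ x = msum R G l

lemma msum_smul (r : R) (l : List (R × MonD G)) :
    msum R G (l.map fun p => (r * p.1, p.2)) = r • msum R G l := by
  induction l with
  | nil => simp [msum]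
  | cons p t ih => simp [msum_cons, ih, mul_smul, smul_add]

lemma homog_of_mem_component {k : ℤ} {x : LPA R G} (hx : x ∈ lpaComponent R G k) :
    Homog R G x k := by
  refine Submodule.span_induction ?_ ?_ ?_ ?_ hx
  · rintro z ⟨v₁, v₂, w, α, β, hk, rfl⟩
    exact ⟨[(1, ⟨v₁, v₂, w, α, β⟩)], by simpa [MonD.deg] using hk,
      by simp [msum, MonD.val]⟩
  · exact ⟨[], by simp, by simp [msum]⟩
  · rintro a b _ _ ⟨l₁, h₁, rfl⟩ ⟨l₂, h₂, rfl⟩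
    refine ⟨l₁ ++ l₂, ?_, (msum_append R G l₁ l₂).symm⟩
    intro p hp
    rcases List.mem_append.mp hp with h | h
    · exact h₁ p h
    · exact h₂ p h
  · rintro r a _ ⟨l, h, rfl⟩
    refine ⟨l.map fun p => (r * p.1, p.2), ?_, (msum_smul R G r l).symm⟩
    intro p hp
    rcases List.mem_map.mp hp with ⟨q, hq, rfl⟩
    exact h q hq

lemma exists_homog (I : TwoSidedIdeal (LPA R G)) (hgr : IsGraded R G I)
    (x : LPA R G) (hxI : x ∈ I) (hx0 : x ≠ 0) :
    ∃ y k, y ∈ I ∧ Homog R G y k ∧ y ≠ 0 := by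
  have h := hgr x hxI
  have key : x = 0 ∨ ∃ y k, y ∈ I ∧ Homog R G y k ∧ y ≠ 0 := by
    refine Submodule.span_induction ?_ ?_ ?_ ?_ h
    · intro z hz
      rcases Set.mem_iUnion.mp hz with ⟨k, hzk⟩
      by_cases h0 : z = 0
      · exact Or.inl h0
      · exact Or.inr ⟨z, k, hzk.1, homog_of_mem_component R G hzk.2, h0⟩
    · exact Or.inl rfl
    · rintro a b _ _ (ha | ha) (hb | hb)
      · exact Or.inl (by rw [ha, hb, add_zero])
      · exact Or.inr hb
      · exact Or.inr ha
      · exact Or.inr ha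
    · rintro r a _ (ha | ha)
      · exact Or.inl (by rw [ha, smul_zero])
      · exact Or.inr ha
  rcases key with h0 | hk
  · exact absurd h0 hx0
  · exact hk
end Aux2

open LPGraph

section Aux3
open scoped Classical
variable (R : Type) [CommRing R] (G : LPGraph)

def iniA {G : LPGraph} : MonD G → Option G.E
  | ⟨_, _, _, Path.cons e _, _⟩ => some e
  | _ => none

def iniB {G : LPGraph} : MonD G → Option G.E
  | ⟨_, _, _, _, Path.cons f _⟩ => some f
  | _ => none

example (e₀ : G.E) {w v₂ : G.V} (α' : G.Path (G.r e₀) w) (β : G.Path v₂ w) :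
    iniA ⟨_, v₂, w, Path.cons e₀ α', β⟩ = some e₀ := rfl

example (f₀ : G.E) {w v₁ : G.V} (α : G.Path v₁ w) (β' : G.Path (G.r f₀) w) :
    iniB ⟨v₁, _, w, α, Path.cons f₀ β'⟩ = some f₀ := by
  cases α <;> rfl

lemma coreA (I : TwoSidedIdeal (LPA R G)) :
    ∀ n : ℕ, ∀ k : ℤ, k.natAbs = n → ∀ x : LPA R G, x ∈ I → x ≠ 0 → Homog R G x k →
      ∃ y, y ∈ I ∧ y ≠ 0 ∧ Homog R G y 0 := by
  intro n
  induction n using Nat.strong_induction_on with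
  | _ n ih =>
  intro k hk x hxI hx0 hx
  obtain ⟨l, hl, hsum⟩ := hx
  rcases lt_trichotomy k 0 with hneg | rfl | hpos
  · -- k < 0 : multiply on the right
    set E₂ := (l.filterMap (fun p => iniB p.2)).toFinset with hE₂def
    have hrec : ∀ p ∈ l, (∑ f ∈ E₂, (p.1 • MonD.val R G p.2) * Xe R G f * Xg R G f)
        = p.1 • MonD.val R G p.2 := by
      rintro ⟨r, ⟨v₁, v₂, w, α, β⟩⟩ hp
      have hdeg := hl _ hp
      cases β with
      | nil v => exfalso; simp [MonD.deg, LPGraph.Path.length] at hdeg; omega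
      | cons f₀ β' =>
        have hf₀ : f₀ ∈ E₂ := by
          rw [hE₂def, List.mem_toFinset]
          refine List.mem_filterMap.mpr ⟨_, hp, ?_⟩
          cases α <;> rfl
        rw [Finset.sum_eq_single f₀]
        · rw [smul_mul_assoc, smul_mul_assoc]
          congr 1
          simp only [MonD.val]
          rw [mul_assoc (pathE R G α), pathG_cons_mul_Xe, if_pos rfl, mul_assoc, ← pathG_cons]
        · intro f _ hne
          rw [smul_mul_assoc, smul_mul_assoc]
          simp only [MonD.val]
          rw [mul_assoc (pathE R G α), pathG_cons_mul_Xe, if_neg hne]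
          simp
        · intro habs; exact absurd hf₀ habs
    have hxrec : ∑ f ∈ E₂, x * Xe R G f * Xg R G f = x := by
      calc ∑ f ∈ E₂, x * Xe R G f * Xg R G f
          = ∑ f ∈ E₂, (l.map (fun p => (p.1 • MonD.val R G p.2) * Xe R G f * Xg R G f)).sum := by
            refine Finset.sum_congr rfl fun f _ => ?_
            rw [hsum]; simp only [msum, list_sum_mul]
        _ = (l.map (fun p => ∑ f ∈ E₂, (p.1 • MonD.val R G p.2) * Xe R G f * Xg R G f)).sum :=
            finset_sum_list_sum R G E₂ l _
        _ = x := by rw [List.map_congr_left hrec, hsum]; rfl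
    by_cases hall : ∀ f ∈ E₂, x * Xe R G f = 0
    · exfalso
      apply hx0
      rw [← hxrec]
      exact Finset.sum_eq_zero fun f hf => by rw [hall f hf, zero_mul]
    · push_neg at hall
      obtain ⟨f, _, hze⟩ := hall
      have hzI : x * Xe R G f ∈ I := I.mul_mem_right _ _ hxI
      have hzH : Homog R G (x * Xe R G f) (k + 1) := by
        suffices h : ∀ t : List (R × MonD G), (∀ p ∈ t, MonD.deg G p.2 = k) →
            ∃ t', (∀ p ∈ t', MonD.deg G p.2 = k + 1) ∧
              msum R G t * Xe R G f = msum R G t' by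
          obtain ⟨t', h1, h2⟩ := h l hl
          exact ⟨t', h1, by rw [hsum]; exact h2⟩
        intro t
        induction t with
        | nil => intro _; exact ⟨[], by simp, by simp [msum]⟩
        | cons p t iht =>
          intro hpt
          obtain ⟨t', h1, h2⟩ := iht (fun q hq => hpt q (List.mem_cons_of_mem _ hq))
          rcases p with ⟨r, ⟨v₁, v₂, w, α, β⟩⟩
          have hdeg := hpt _ List.mem_cons_self
          cases β with
          | nil v => exfalso; simp [MonD.deg, LPGraph.Path.length] at hdeg; omega
          | cons f₀ β' =>
            refine ⟨((if f = f₀ then r else 0), ⟨v₁, _, w, α, β'⟩) :: t', ?_, ?_⟩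
            · intro q hq
              rcases List.mem_cons.mp hq with rfl | hq
              · simp only [MonD.deg, LPGraph.Path.length] at hdeg ⊢
                push_cast at hdeg ⊢
                omega
              · exact h1 q hq
            · rw [msum_cons, msum_cons, add_mul, h2]
              congr 1
              rw [smul_mul_assoc]
              simp only [MonD.val]
              rw [mul_assoc, pathG_cons_mul_Xe]
              split_ifs with hcase
              · rfl
              · simp
      have hklt : (k + 1).natAbs < n := by omega
      exact ih _ hklt (k + 1) rfl _ hzI hze hzH
  · exact ⟨x, hxI, hx0, l, hl, hsum⟩
  · -- k > 0 : multiply on the left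
    set E₁ := (l.filterMap (fun p => iniA p.2)).toFinset with hE₁def
    have hrec : ∀ p ∈ l, (∑ e ∈ E₁, Xe R G e * (Xg R G e * (p.1 • MonD.val R G p.2)))
        = p.1 • MonD.val R G p.2 := by
      rintro ⟨r, ⟨v₁, v₂, w, α, β⟩⟩ hp
      have hdeg := hl _ hp
      cases α with
      | nil v => exfalso; simp [MonD.deg, LPGraph.Path.length] at hdeg; omega
      | cons e₀ α' =>
        have he₀ : e₀ ∈ E₁ := by
          rw [hE₁def, List.mem_toFinset]
          exact List.mem_filterMap.mpr ⟨_, hp, rfl⟩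
        rw [Finset.sum_eq_single e₀]
        · rw [mul_smul_comm, mul_smul_comm]
          congr 1
          simp only [MonD.val]
          rw [← mul_assoc (Xg R G e₀), Xg_mul_pathE_cons, if_pos rfl, ← mul_assoc, ← pathE_cons]
        · intro e _ hne
          rw [mul_smul_comm, mul_smul_comm]
          simp only [MonD.val]
          rw [← mul_assoc (Xg R G e), Xg_mul_pathE_cons, if_neg hne]
          simp
        · intro habs; exact absurd he₀ habs
    have hxrec : ∑ e ∈ E₁, Xe R G e * (Xg R G e * x) = x := by
      calc ∑ e ∈ E₁, Xe R G e * (Xg R G e * x)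
          = ∑ e ∈ E₁, (l.map (fun p => Xe R G e * (Xg R G e * (p.1 • MonD.val R G p.2)))).sum := by
            refine Finset.sum_congr rfl fun e _ => ?_
            rw [hsum]; simp only [msum, list_mul_sum]
        _ = (l.map (fun p => ∑ e ∈ E₁, Xe R G e * (Xg R G e * (p.1 • MonD.val R G p.2)))).sum :=
            finset_sum_list_sum R G E₁ l _
        _ = x := by rw [List.map_congr_left hrec, hsum]; rfl
    by_cases hall : ∀ e ∈ E₁, Xg R G e * x = 0
    · exfalso
      apply hx0
      rw [← hxrec]
      exact Finset.sum_eq_zero fun e he => by rw [hall e he, mul_zero]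
    · push_neg at hall
      obtain ⟨e, _, hze⟩ := hall
      have hzI : Xg R G e * x ∈ I := I.mul_mem_left _ _ hxI
      have hzH : Homog R G (Xg R G e * x) (k - 1) := by
        suffices h : ∀ t : List (R × MonD G), (∀ p ∈ t, MonD.deg G p.2 = k) →
            ∃ t', (∀ p ∈ t', MonD.deg G p.2 = k - 1) ∧
              Xg R G e * msum R G t = msum R G t' by
          obtain ⟨t', h1, h2⟩ := h l hl
          exact ⟨t', h1, by rw [hsum]; exact h2⟩
        intro t
        induction t with
        | nil => intro _; exact ⟨[], by simp, by simp [msum]⟩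
        | cons p t iht =>
          intro hpt
          obtain ⟨t', h1, h2⟩ := iht (fun q hq => hpt q (List.mem_cons_of_mem _ hq))
          rcases p with ⟨r, ⟨v₁, v₂, w, α, β⟩⟩
          have hdeg := hpt _ List.mem_cons_self
          cases α with
          | nil v => exfalso; simp [MonD.deg, LPGraph.Path.length] at hdeg; omega
          | cons e₀ α' =>
            refine ⟨((if e = e₀ then r else 0), ⟨_, v₂, w, α', β⟩) :: t', ?_, ?_⟩
            · intro q hq
              rcases List.mem_cons.mp hq with rfl | hq
              · simp only [MonD.deg, LPGraph.Path.length] at hdeg ⊢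
                push_cast at hdeg ⊢
                omega
              · exact h1 q hq
            · rw [msum_cons, msum_cons, mul_add, h2]
              congr 1
              rw [mul_smul_comm]
              simp only [MonD.val]
              rw [← mul_assoc (Xg R G e), Xg_mul_pathE_cons]
              split_ifs with hcase
              · rfl
              · simp
      have hklt : (k - 1).natAbs < n := by omega
      exact ih _ hklt (k - 1) rfl _ hzI hze hzH

end Aux3

open LPGraph

section Aux4
open scoped Classical
variable (R : Type) [CommRing R] (G : LPGraph)

lemma localize (x : LPA R G) (hx0 : x ≠ 0)
    (l : List (R × MonD G)) (hsum : x = msum R G l) :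
    ∃ (v w : G.V) (l' : List (R × MonD G)),
      (∀ p ∈ l', p ∈ l ∧ p.2.v₁ = v ∧ p.2.v₂ = w) ∧
      Xv R G v * x * Xv R G w = msum R G l' ∧ Xv R G v * x * Xv R G w ≠ 0 := by
  classical
  set S := (l.map (fun p => p.2.v₁)).toFinset with hS
  set T := (l.map (fun p => p.2.v₂)).toFinset with hT
  have hrec : ∀ p ∈ l, (∑ q ∈ S ×ˢ T, Xv R G q.1 * (p.1 • MonD.val R G p.2) * Xv R G q.2)
      = p.1 • MonD.val R G p.2 := by
    rintro ⟨r, ⟨v₁, v₂, w, α, β⟩⟩ hp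
    have hmem : (v₁, v₂) ∈ S ×ˢ T := by
      rw [Finset.mem_product]
      constructor
      · rw [hS, List.mem_toFinset]; exact List.mem_map.mpr ⟨_, hp, rfl⟩
      · rw [hT, List.mem_toFinset]; exact List.mem_map.mpr ⟨_, hp, rfl⟩
    rw [Finset.sum_eq_single (v₁, v₂)]
    · rw [mul_smul_comm, smul_mul_assoc]
      congr 1
      simp only [MonD.val]
      rw [← mul_assoc, Xv_mul_pathE_self, mul_assoc, pathG_mul_Xv_self]
    · rintro ⟨a, b⟩ hq hne
      simp only [MonD.val]
      by_cases ha : a = v₁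
      · subst ha
        have hb : b ≠ v₂ := fun h => hne (by rw [h])
        rw [mul_smul_comm, smul_mul_assoc, mul_assoc, mul_assoc,
          pathG_mul_Xv_ne R G β b hb]
        simp
      · rw [mul_smul_comm, smul_mul_assoc, ← mul_assoc, Xv_mul_pathE_ne R G α a ha]
        simp
    · intro h; exact absurd hmem h
  have hxrec : ∑ q ∈ S ×ˢ T, Xv R G q.1 * x * Xv R G q.2 = x := by
    calc ∑ q ∈ S ×ˢ T, Xv R G q.1 * x * Xv R G q.2
        = ∑ q ∈ S ×ˢ T,
            (l.map (fun p => Xv R G q.1 * (p.1 • MonD.val R G p.2) * Xv R G q.2)).sum := by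
          refine Finset.sum_congr rfl fun q _ => ?_
          rw [hsum]; simp only [msum, mul_list_sum_mul]
      _ = (l.map (fun p => ∑ q ∈ S ×ˢ T, Xv R G q.1 * (p.1 • MonD.val R G p.2) * Xv R G q.2)).sum :=
          finset_sum_list_sum R G _ l _
      _ = x := by rw [List.map_congr_left hrec, hsum]; rfl
  have hex : ∃ q : G.V × G.V, Xv R G q.1 * x * Xv R G q.2 ≠ 0 := by
    by_contra hcon
    push_neg at hcon
    exact hx0 (by rw [← hxrec]; exact Finset.sum_eq_zero fun q _ => hcon q)
  obtain ⟨⟨v, w⟩, hy0⟩ := hex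
  refine ⟨v, w, l.filter (fun p => decide (p.2.v₁ = v ∧ p.2.v₂ = w)), ?_, ?_, hy0⟩
  · intro p hp
    rw [List.mem_filter] at hp
    exact ⟨hp.1, of_decide_eq_true hp.2⟩
  · rw [hsum]; simp only [msum, mul_list_sum_mul]
    rw [← sum_ite_eq_filter R G l _ (fun p => p.2.v₁ = v ∧ p.2.v₂ = w)]
    refine congrArg List.sum (List.map_congr_left ?_)
    rintro ⟨r, ⟨v₁, v₂, w₀, α, β⟩⟩ hp
    by_cases h1 : v₁ = v
    · by_cases h2 : v₂ = w
      · subst h1; subst h2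
        rw [if_pos ⟨rfl, rfl⟩]
        rw [mul_smul_comm, smul_mul_assoc]
        congr 1
        simp only [MonD.val]
        rw [← mul_assoc, Xv_mul_pathE_self, mul_assoc, pathG_mul_Xv_self]
      · rw [if_neg (by simp [h2])]
        simp only [MonD.val]
        rw [mul_smul_comm, smul_mul_assoc, mul_assoc, mul_assoc,
          pathG_mul_Xv_ne R G β w (fun h => h2 h.symm)]
        simp
    · rw [if_neg (by simp [h1])]
      simp only [MonD.val]
      rw [mul_smul_comm, smul_mul_assoc, ← mul_assoc,
        Xv_mul_pathE_ne R G α v (fun h => h1 h.symm)]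
      simp

lemma pure_vertex (I : TwoSidedIdeal (LPA R G)) (v : G.V) (y : LPA R G)
    (hyI : y ∈ I) (hy0 : y ≠ 0) (l : List (R × MonD G))
    (hl : ∀ p ∈ l, MonD.siz G p.2 = 0 ∧ p.2.v₁ = v)
    (hsum : y = msum R G l) :
    ∃ (v : G.V) (r : R), r ≠ 0 ∧ r • Xv R G v ∈ I := by
  have h : ∀ p ∈ l, ∃ c : R, p.1 • MonD.val R G p.2 = c • Xv R G v := by
    rintro ⟨r, ⟨v₁, v₂, w₀, α, β⟩⟩ hp
    obtain ⟨hsiz, hv1⟩ := hl _ hp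
    cases α with
    | cons e p => simp [MonD.siz, LPGraph.Path.length] at hsiz
    | nil a =>
      cases β with
      | cons e p => simp [MonD.siz, LPGraph.Path.length] at hsiz
      | nil b =>
        refine ⟨r, ?_⟩
        have hv1' : v₁ = v := hv1
        simp only [MonD.val, pathE_nil, pathG_nil, Xv_mul_self]
        rw [hv1']
  obtain ⟨s, hs⟩ := exists_smul_sum R G l _ (Xv R G v) h
  have hys : y = s • Xv R G v := by rw [hsum]; simp only [msum]; exact hs
  have hs0 : s ≠ 0 := fun h0 => hy0 (by rw [hys, h0, zero_smul])
  exact ⟨v, s, hs0, hys ▸ hyI⟩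
end Aux4

open LPGraph

section Aux5
open scoped Classical
variable (R : Type) [CommRing R] (G : LPGraph)

lemma coreB (I : TwoSidedIdeal (LPA R G)) :
    ∀ m : ℕ, ∀ x : LPA R G, x ∈ I → x ≠ 0 →
      (∃ l : List (R × MonD G),
        (∀ p ∈ l, MonD.deg G p.2 = 0 ∧ MonD.siz G p.2 ≤ m) ∧ x = msum R G l) →
      ∃ (v : G.V) (r : R), r ≠ 0 ∧ r • Xv R G v ∈ I := by
  intro m
  induction m with
  | zero =>
    rintro x hxI hx0 ⟨l, hl, hsum⟩
    obtain ⟨v, w, l', hl', hsum', hy0⟩ := localize R G x hx0 l hsum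
    have hyI : Xv R G v * x * Xv R G w ∈ I := I.mul_mem_right _ _ (I.mul_mem_left _ _ hxI)
    refine pure_vertex R G I v _ hyI hy0 l' ?_ hsum'
    intro p hp
    obtain ⟨hpl, h1, h2⟩ := hl' p hp
    exact ⟨Nat.le_zero.mp (hl p hpl).2, h1⟩
  | succ m ihm =>
    rintro x hxI hx0 ⟨l, hl, hsum⟩
    obtain ⟨v, w, l', hl', hsum', hy0⟩ := localize R G x hx0 l hsum
    have hyI : Xv R G v * x * Xv R G w ∈ I := I.mul_mem_right _ _ (I.mul_mem_left _ _ hxI)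
    set y := Xv R G v * x * Xv R G w with hydef
    have hprop : ∀ p ∈ l', MonD.deg G p.2 = 0 ∧ MonD.siz G p.2 ≤ m + 1 ∧
        p.2.v₁ = v ∧ p.2.v₂ = w := by
      intro p hp
      obtain ⟨hpl, h1, h2⟩ := hl' p hp
      exact ⟨(hl p hpl).1, (hl p hpl).2, h1, h2⟩
    by_cases hz : ∀ e f : G.E, Xg R G e * y * Xe R G f = 0
    · -- all conjugates vanish : y = s • (Xv v - Q)
      set E₁ := (l'.filterMap (fun p => iniA p.2)).toFinset with hE₁def
      set E₂ := (l'.filterMap (fun p => iniB p.2)).toFinset with hE₂def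
      have hE₁v : ∀ e ∈ E₁, G.s e = v := by
        intro e he
        rw [hE₁def, List.mem_toFinset] at he
        obtain ⟨p, hp, hini⟩ := List.mem_filterMap.mp he
        have hv1 := (hprop _ hp).2.2.1
        obtain ⟨r, ⟨v₁, v₂, w₀, α, β⟩⟩ := p
        cases α with
        | nil a => simp [iniA] at hini
        | cons e₀ α' =>
          have he' : e₀ = e := by simpa [iniA] using hini
          subst he'
          exact hv1
      set Q := ∑ e₀ ∈ E₁ ∩ E₂, Xe R G e₀ * Xg R G e₀ with hQdef
      have hkey : ∀ p ∈ l', ∃ c : R,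
          (p.1 • MonD.val R G p.2)
            - (∑ q ∈ E₁ ×ˢ E₂, Xe R G q.1 *
                (Xg R G q.1 * (p.1 • MonD.val R G p.2) * Xe R G q.2) * Xg R G q.2)
          = c • (Xv R G v - Q) := by
        intro p hp
        obtain ⟨hdeg, hsiz, hv1, hv2⟩ := hprop p hp
        rcases p with ⟨r, ⟨v₁, v₂, w₀, α, β⟩⟩
        cases α with
        | nil a =>
          cases β with
          | cons f₀ β' =>
            exfalso; simp [MonD.deg, LPGraph.Path.length] at hdeg; omega
          | nil b =>
            have hv1' : v₁ = v := hv1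
            refine ⟨r, ?_⟩
            have hval : MonD.val R G ⟨v₁, v₁, v₁, Path.nil v₁, Path.nil v₁⟩ = Xv R G v := by
              simp only [MonD.val, pathE_nil, pathG_nil, Xv_mul_self, hv1']
            rw [hval]
            have hctr : (∑ q ∈ E₁ ×ˢ E₂, Xe R G q.1 *
                (Xg R G q.1 * (r • Xv R G v) * Xe R G q.2) * Xg R G q.2) = r • Q := by
              have hpt : ∀ q ∈ E₁ ×ˢ E₂,
                  Xe R G q.1 * (Xg R G q.1 * (r • Xv R G v) * Xe R G q.2) * Xg R G q.2
                  = if q.1 = q.2 then r • (Xe R G q.1 * Xg R G q.1) else 0 := by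
                rintro ⟨e, f⟩ hq
                have hse : G.s e = v := hE₁v e (Finset.mem_product.mp hq).1
                rw [mul_smul_comm, smul_mul_assoc, mul_smul_comm, smul_mul_assoc]
                rw [← hse, Xg_mul_Xv]
                by_cases hef : e = f
                · subst hef
                  rw [if_pos rfl, Xg_mul_Xe_same, Xe_mul_Xv]
                · rw [if_neg hef, Xg_mul_Xe_diff R G e f hef]
                  simp
              rw [Finset.sum_congr rfl hpt,
                sum_product_diag R G E₁ E₂ (fun e => r • (Xe R G e * Xg R G e)), hQdef,
                Finset.smul_sum]
            rw [hctr, smul_sub]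
        | cons e₀ α' =>
          cases β with
          | nil b =>
            exfalso; simp [MonD.deg, LPGraph.Path.length] at hdeg; omega
          | cons f₀ β' =>
            have he₀ : e₀ ∈ E₁ := by
              rw [hE₁def, List.mem_toFinset]
              exact List.mem_filterMap.mpr ⟨_, hp, rfl⟩
            have hf₀ : f₀ ∈ E₂ := by
              rw [hE₂def, List.mem_toFinset]
              exact List.mem_filterMap.mpr ⟨_, hp, rfl⟩
            refine ⟨0, ?_⟩
            rw [zero_smul, sub_eq_zero]
            symm
            rw [Finset.sum_eq_single (e₀, f₀)]
            · simp only [MonD.val]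
              rw [mul_smul_comm, smul_mul_assoc, mul_smul_comm, smul_mul_assoc]
              congr 1
              rw [← mul_assoc (Xg R G e₀), Xg_mul_pathE_cons, if_pos rfl,
                mul_assoc (pathE R G α'), pathG_cons_mul_Xe, if_pos rfl]
              rw [← mul_assoc, ← pathE_cons, mul_assoc, ← pathG_cons]
            · rintro ⟨e, f⟩ hq hne
              simp only [MonD.val]
              rw [mul_smul_comm, smul_mul_assoc, mul_smul_comm, smul_mul_assoc]
              by_cases he : e = e₀
              · subst he
                have hf : f ≠ f₀ := by
                  intro h; exact hne (by rw [h])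
                rw [← mul_assoc (Xg R G e), Xg_mul_pathE_cons, if_pos rfl,
                  mul_assoc (pathE R G α'), pathG_cons_mul_Xe, if_neg hf]
                simp
              · rw [← mul_assoc (Xg R G e), Xg_mul_pathE_cons, if_neg he]
                simp
            · intro habs
              exact absurd (Finset.mem_product.mpr ⟨he₀, hf₀⟩) habs
      have hstep : ∀ q : G.E × G.E,
          Xe R G q.1 * (Xg R G q.1 * y * Xe R G q.2) * Xg R G q.2
          = (l'.map (fun p => Xe R G q.1 *
              (Xg R G q.1 * (p.1 • MonD.val R G p.2) * Xe R G q.2) * Xg R G q.2)).sum := by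
        intro q
        rw [hsum']
        simp only [msum, mul_list_sum_mul]
      have hW0 : (∑ q ∈ E₁ ×ˢ E₂, Xe R G q.1 * (Xg R G q.1 * y * Xe R G q.2) * Xg R G q.2)
          = 0 := Finset.sum_eq_zero fun q _ => by rw [hz q.1 q.2]; simp
      have hyW : y - (∑ q ∈ E₁ ×ˢ E₂, Xe R G q.1 * (Xg R G q.1 * y * Xe R G q.2) * Xg R G q.2)
          = (l'.map (fun p => (p.1 • MonD.val R G p.2)
              - (∑ q ∈ E₁ ×ˢ E₂, Xe R G q.1 *
                  (Xg R G q.1 * (p.1 • MonD.val R G p.2) * Xe R G q.2) * Xg R G q.2))).sum := by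
        calc y - (∑ q ∈ E₁ ×ˢ E₂, Xe R G q.1 * (Xg R G q.1 * y * Xe R G q.2) * Xg R G q.2)
            = (l'.map (fun p => p.1 • MonD.val R G p.2)).sum
              - ∑ q ∈ E₁ ×ˢ E₂, (l'.map (fun p => Xe R G q.1 *
                  (Xg R G q.1 * (p.1 • MonD.val R G p.2) * Xe R G q.2) * Xg R G q.2)).sum := by
              rw [Finset.sum_congr rfl fun q _ => hstep q, hsum']
              simp only [msum]
          _ = _ := by
              rw [finset_sum_list_sum, list_sum_sub]
      obtain ⟨s, hs⟩ := exists_smul_sum R G l' _ (Xv R G v - Q) hkey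
      have hy : y = s • (Xv R G v - Q) := by
        have h0 := hyW
        rw [hW0, sub_zero] at h0
        rw [h0, hs]
      have hs0 : s ≠ 0 := fun h0 => hy0 (by rw [hy, h0, zero_smul])
      by_cases hg : ∃ g : G.E, G.s g = v ∧ g ∉ E₁ ∩ E₂
      · obtain ⟨g, hgv, hgE⟩ := hg
        have hmemI : Xg R G g * y * Xe R G g ∈ I :=
          I.mul_mem_right _ _ (I.mul_mem_left _ _ hyI)
        have hkey2 : Xg R G g * y * Xe R G g = s • Xv R G (G.r g) := by
          rw [hy, mul_smul_comm, smul_mul_assoc]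
          congr 1
          rw [mul_sub, sub_mul]
          rw [← hgv, Xg_mul_Xv, Xg_mul_Xe_same]
          have hQ0 : Xg R G g * Q * Xe R G g = 0 := by
            rw [hQdef, Finset.mul_sum, Finset.sum_mul]
            refine Finset.sum_eq_zero fun e he => ?_
            have hne : g ≠ e := fun h => hgE (h ▸ he)
            rw [← mul_assoc, Xg_mul_Xe_diff R G g e hne]
            simp
          rw [hQ0, sub_zero]
        exact ⟨G.r g, s, hs0, hkey2 ▸ hmemI⟩
      · push_neg at hg
        have hsub : ∀ e ∈ E₁ ∩ E₂, G.s e = v := fun e he =>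
          hE₁v e (Finset.mem_inter.mp he).1
        by_cases hne' : (E₁ ∩ E₂).Nonempty
        · exfalso
          have h1 : {e : G.E | G.s e = v}.Finite := by
            apply Set.Finite.subset (E₁ ∩ E₂).finite_toSet
            intro e he
            exact hg e he
          have h2 : {e : G.E | G.s e = v}.Nonempty := by
            obtain ⟨e, he⟩ := hne'
            exact ⟨e, hsub e he⟩
          have hck := Xv_ck2 R G v h1 h2
          have hQv : Xv R G v = Q := by
            rw [hck, hQdef]
            refine Finset.sum_congr ?_ (fun _ _ => rfl)
            ext e
            simp only [Set.Finite.mem_toFinset, Set.mem_setOf_eq]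
            exact ⟨fun h => hg e h, fun h => hsub e h⟩
          apply hy0
          rw [hy, hQv, sub_self, smul_zero]
        · rw [Finset.not_nonempty_iff_eq_empty] at hne'
          have hQ0 : Q = 0 := by rw [hQdef, hne', Finset.sum_empty]
          refine ⟨v, s, hs0, ?_⟩
          have hyv : y = s • Xv R G v := by rw [hy, hQ0, sub_zero]
          exact hyv ▸ hyI
    · push_neg at hz
      obtain ⟨e, f, hz0⟩ := hz
      have hzI : Xg R G e * y * Xe R G f ∈ I :=
        I.mul_mem_right _ _ (I.mul_mem_left _ _ hyI)
      refine ihm _ hzI hz0 ?_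
      suffices h : ∀ t : List (R × MonD G),
          (∀ p ∈ t, MonD.deg G p.2 = 0 ∧ MonD.siz G p.2 ≤ m + 1) →
          ∃ t', (∀ p ∈ t', MonD.deg G p.2 = 0 ∧ MonD.siz G p.2 ≤ m) ∧
            Xg R G e * msum R G t * Xe R G f = msum R G t' by
        obtain ⟨t', h1, h2⟩ := h l' (fun p hp => ⟨(hprop p hp).1, (hprop p hp).2.1⟩)
        refine ⟨t', h1, ?_⟩
        rw [hsum']
        exact h2
      intro t
      induction t with
      | nil => intro _; exact ⟨[], by simp, by simp [msum]⟩
      | cons p t iht =>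
        intro hpt
        obtain ⟨t', h1, h2⟩ := iht (fun q hq => hpt q (List.mem_cons_of_mem _ hq))
        obtain ⟨hdeg, hsiz⟩ := hpt _ List.mem_cons_self
        rcases p with ⟨r, ⟨v₁, v₂, w₀, α, β⟩⟩
        have key : ∃ q : R × MonD G, MonD.deg G q.2 = 0 ∧ MonD.siz G q.2 ≤ m ∧
            Xg R G e * (r • MonD.val R G ⟨v₁, v₂, w₀, α, β⟩) * Xe R G f
              = q.1 • MonD.val R G q.2 := by
          cases α with
          | nil a =>
            cases β with
            | cons f₀ β' =>
              exfalso; simp [MonD.deg, LPGraph.Path.length] at hdeg; omega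
            | nil b =>
              refine ⟨((if G.s e = v₁ ∧ e = f then r else 0),
                ⟨G.r e, G.r e, G.r e, Path.nil (G.r e), Path.nil (G.r e)⟩),
                by simp [MonD.deg], by simp [MonD.siz, LPGraph.Path.length], ?_⟩
              simp only [MonD.val, pathE_nil, pathG_nil, Xv_mul_self]
              rw [mul_smul_comm, smul_mul_assoc]
              by_cases hse : G.s e = v₁
              · by_cases hef : e = f
                · subst hef
                  rw [if_pos ⟨hse, rfl⟩]
                  congr 1
                  rw [← hse, Xg_mul_Xv, Xg_mul_Xe_same]
                · rw [if_neg (by tauto)]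
                  rw [← hse, Xg_mul_Xv, Xg_mul_Xe_diff R G e f hef]
                  simp
              · rw [if_neg (by tauto), Xg_mul_Xv_ne R G e v₁ (fun h => hse h.symm)]
                simp
          | cons e₀ α' =>
            cases β with
            | nil b =>
              exfalso; simp [MonD.deg, LPGraph.Path.length] at hdeg; omega
            | cons f₀ β' =>
              refine ⟨((if e = e₀ ∧ f = f₀ then r else 0), ⟨_, _, _, α', β'⟩), ?_, ?_, ?_⟩
              · simp only [MonD.deg, LPGraph.Path.length] at hdeg ⊢
                push_cast at hdeg ⊢
                omega
              · simp only [MonD.siz, LPGraph.Path.length] at hsiz ⊢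
                omega
              · simp only [MonD.val]
                rw [mul_smul_comm, smul_mul_assoc]
                rw [← mul_assoc (Xg R G e), Xg_mul_pathE_cons]
                by_cases he : e = e₀
                · rw [if_pos he, mul_assoc, pathG_cons_mul_Xe]
                  by_cases hf : f = f₀
                  · rw [if_pos hf, if_pos ⟨he, hf⟩]
                  · rw [if_neg hf, if_neg (by tauto)]
                    simp
                · rw [if_neg he, if_neg (by tauto)]
                  simp
        obtain ⟨q, hq1, hq2, hq3⟩ := key
        refine ⟨q :: t', ?_, ?_⟩
        · intro q' hq'
          rcases List.mem_cons.mp hq' with rfl | hq'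
          · exact ⟨hq1, hq2⟩
          · exact h1 q' hq'
        · rw [msum_cons, msum_cons, mul_add, add_mul, h2, hq3]
end Aux5

open LPGraph

lemma exists_bound (G : LPGraph) {R : Type} [CommRing R] (l : List (R × MonD G)) :
    ∃ m, ∀ p ∈ l, MonD.siz G p.2 ≤ m := by
  induction l with
  | nil => exact ⟨0, by simp⟩
  | cons p t ih =>
    obtain ⟨m, hm⟩ := ih
    refine ⟨max (MonD.siz G p.2) m, ?_⟩
    intro q hq
    rcases List.mem_cons.mp hq with rfl | hq
    · exact le_max_left _ _
    · exact le_trans (hm q hq) (le_max_right _ _)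

/-- A nonzero graded ideal of `L_R(E)` contains `rv` for some vertex `v` and `r ≠ 0`. -/
theorem graded_ideal_contains_smul_vertex (G : LPGraph) (R : Type) [CommRing R]
    (I : TwoSidedIdeal (LPA R G)) (hgr : IsGraded R G I) (hne : ∃ x ∈ I, x ≠ 0) :
    ∃ (v : G.V) (r : R), r ≠ 0 ∧ r • Xv R G v ∈ I := by
  obtain ⟨x, hxI, hx0⟩ := hne
  obtain ⟨y, k, hyI, hyH, hy0⟩ := exists_homog R G I hgr x hxI hx0
  obtain ⟨z, hzI, hz0, l, hl, hsum⟩ := coreA R G I k.natAbs k rfl y hyI hy0 hyH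
  obtain ⟨m, hm⟩ := exists_bound G l
  exact coreB R G I m z hzI hz0 ⟨l, fun p hp => ⟨hl p hp, hm p hp⟩, hsum⟩
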